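/- Let B be a Boolean algebra, S a finite subset of B closed under meet and containing ⊥ and ⊤, and m₁, m₂ bbas on S. Suppose f : S × S → ℝ satisfies the fusion constraints for (m₁, m₂), and define the fused bba m₁⊕m₂ and the belief functions Bel₁, Bel₂, Bel₁⊕Bel₂ accordingly. Then the fused belief dominates both input beliefs: for every φ ∈ S, Bel₁⊕Bel₂(φ) ≥ max{Bel₁(φ), Bel₂(φ)}. -/
import Mathlib


open scoped Classical

/-- Belief enhancement: if `f` satisfies the fusion constraints for
`(m₁, m₂)`, the fused belief dominates both input beliefs:
`Bel₁⊕Bel₂(φ) ≥ max {Bel₁(φ), Bel₂(φ)}` for every `φ ∈ S`. -/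
theorem fused_belief_enhancement {B : Type*} [BooleanAlgebra B]
    (S : Finset B)
    (hmeet : ∀ x ∈ S, ∀ y ∈ S, x ⊓ y ∈ S)
    (hbot : ⊥ ∈ S) (htop : ⊤ ∈ S)
    (m₁ m₂ : B → ℝ)
    (hm₁0 : ∀ φ ∈ S, 0 ≤ m₁ φ) (hm₁bot : m₁ ⊥ = 0) (hm₁sum : ∑ φ ∈ S, m₁ φ = 1)
    (hm₂0 : ∀ φ ∈ S, 0 ≤ m₂ φ) (hm₂bot : m₂ ⊥ = 0) (hm₂sum : ∑ φ ∈ S, m₂ φ = 1)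
    (f : B → B → ℝ)
    (hf0 : ∀ ψ ∈ S, ∀ η ∈ S, 0 ≤ f ψ η)
    (hfm₂ : ∀ η ∈ S, ∑ ψ ∈ S, f ψ η = m₂ η)
    (hfm₁ : ∀ ψ ∈ S, ∑ η ∈ S, f ψ η = m₁ ψ)
    (hfconf : ∀ ψ ∈ S, ∀ η ∈ S, ψ ⊓ η = ⊥ → f ψ η = 0) :
    ∀ φ ∈ S,
      max (∑ ψ ∈ S.filter fun ψ => ψ ≤ φ, m₁ ψ) (∑ ψ ∈ S.filter fun ψ => ψ ≤ φ, m₂ ψ) ≤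
        ∑ ψ ∈ S.filter fun ψ => ψ ≤ φ,
          ∑ q ∈ (S ×ˢ S).filter fun q => q.1 ⊓ q.2 = ψ, f q.1 q.2 := by
  intro φ hφ
  set t := S.filter fun ψ => ψ ≤ φ with ht
  set s := (S ×ˢ S).filter (fun q : B × B => q.1 ⊓ q.2 ≤ φ) with hs
  have key : ∑ ψ ∈ t, ∑ q ∈ (S ×ˢ S).filter (fun q => q.1 ⊓ q.2 = ψ), f q.1 q.2
      = ∑ q ∈ s, f q.1 q.2 := by
    rw [← Finset.sum_fiberwise_of_maps_to (g := fun q : B × B => q.1 ⊓ q.2)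
      (t := t) (fun q hq => by
        simp only [hs, Finset.mem_filter, Finset.mem_product] at hq
        simp only [ht, Finset.mem_filter]
        exact ⟨hmeet _ hq.1.1 _ hq.1.2, hq.2⟩)]
    refine Finset.sum_congr rfl fun ψ hψ => Finset.sum_congr ?_ fun _ _ => rfl
    simp only [ht, Finset.mem_filter] at hψ
    ext q
    simp only [hs, Finset.mem_filter, Finset.mem_product]
    constructor
    · rintro ⟨hq, hle⟩
      exact ⟨⟨hq, hle ▸ hψ.2⟩, hle⟩
    · rintro ⟨⟨hq, _⟩, hle⟩
      exact ⟨hq, hle⟩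
  rw [key, max_le_iff]
  have hsub₁ : t ×ˢ S ⊆ s := by
    intro q hq
    simp only [Finset.mem_product, ht, Finset.mem_filter] at hq
    simp only [hs, Finset.mem_filter, Finset.mem_product]
    exact ⟨⟨hq.1.1, hq.2⟩, le_trans inf_le_left hq.1.2⟩
  have hsub₂ : S ×ˢ t ⊆ s := by
    intro q hq
    simp only [Finset.mem_product, ht, Finset.mem_filter] at hq
    simp only [hs, Finset.mem_filter, Finset.mem_product]
    exact ⟨⟨hq.1, hq.2.1⟩, le_trans inf_le_right hq.2.2⟩
  have hnn : ∀ q ∈ s, 0 ≤ f q.1 q.2 := by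
    intro q hq
    simp only [hs, Finset.mem_filter, Finset.mem_product] at hq
    exact hf0 _ hq.1.1 _ hq.1.2
  constructor
  · have h1 : ∑ ψ ∈ t, m₁ ψ = ∑ q ∈ t ×ˢ S, f q.1 q.2 := by
      rw [Finset.sum_product]
      refine Finset.sum_congr rfl fun ψ hψ => ?_
      simp only [ht, Finset.mem_filter] at hψ
      exact (hfm₁ ψ hψ.1).symm
    rw [h1]
    exact Finset.sum_le_sum_of_subset_of_nonneg hsub₁ fun q hq _ => hnn q hq
  · have h2 : ∑ ψ ∈ t, m₂ ψ = ∑ q ∈ S ×ˢ t, f q.1 q.2 := by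
      rw [Finset.sum_product, Finset.sum_comm]
      refine Finset.sum_congr rfl fun ψ hψ => ?_
      simp only [ht, Finset.mem_filter] at hψ
      exact (hfm₂ ψ hψ.1).symm
    rw [h2]
    exact Finset.sum_le_sum_of_subset_of_nonneg hsub₂ fun q hq _ => hnn q hq
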